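/- Fix q' ≥ 1 and let h₁, ..., h_{q'} : ℝ → ℝ be differentiable functions, each bounded above: hᵢ(t) < Mᵢ for all t ≥ 0, with Mᵢ > 0. Let α₁, ..., α_{q'} > 0 and γ > 0. Suppose for all t ≥ 0, Σᵢ αᵢ hᵢ'(t) ≥ -γ · sign(min{h₁(t), ..., h_{q'}(t)}). Then there exists T ∈ (0, ∞) such that min{h₁(T), ..., h_{q'}(T)} ≥ 0, i.e., hᵢ(T) ≥ 0 for all i simultaneously. -/

import Mathlib

theorem stmt_2 (q' : ℕ) (hq : 1 ≤ q') (h : Fin q' → ℝ → ℝ)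
    (hdiff : ∀ i, Differentiable ℝ (h i))
    (M : Fin q' → ℝ) (hM : ∀ i, 0 < M i) (hbdd : ∀ i, ∀ t : ℝ, 0 ≤ t → h i t < M i)
    (α : Fin q' → ℝ) (hα : ∀ i, 0 < α i) (γ : ℝ) (hγ : 0 < γ)
    (hne : (Finset.univ : Finset (Fin q')).Nonempty)
    (hineq : ∀ t : ℝ, 0 ≤ t →
      ∑ i, α i * deriv (h i) t ≥ -γ * Real.sign (Finset.univ.inf' hne fun i => h i t)) :
    ∃ T : ℝ, 0 < T ∧ ∀ i, h i T ≥ 0 := by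
  by_contra hcon
  push_neg at hcon
  set g : ℝ → ℝ := fun t => ∑ i, α i * h i t with hg
  have hgderiv : ∀ t : ℝ, HasDerivAt g (∑ i, α i * deriv (h i) t) t := by
    intro t
    exact HasDerivAt.fun_sum fun i _ => ((hdiff i t).hasDerivAt).const_mul (α i)
  have hkey : ∀ t : ℝ, 1 ≤ t → γ ≤ ∑ i, α i * deriv (h i) t := by
    intro t ht
    have ht0 : (0:ℝ) ≤ t := by linarith
    obtain ⟨i, hi⟩ := hcon t (by linarith)
    have hmin : Finset.univ.inf' hne (fun i => h i t) < 0 :=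
      lt_of_le_of_lt (Finset.inf'_le _ (Finset.mem_univ i)) hi
    have := hineq t ht0
    rw [Real.sign_of_neg hmin] at this
    linarith
  have hfderiv : ∀ t : ℝ, HasDerivAt (fun s => g s - γ * s)
      ((∑ i, α i * deriv (h i) t) - γ) t := by
    intro t
    simpa using (hgderiv t).fun_sub ((hasDerivAt_id t).const_mul γ)
  have hmono : MonotoneOn (fun s => g s - γ * s) (Set.Ici 1) := by
    apply monotoneOn_of_deriv_nonneg (convex_Ici 1)
    · exact (Continuous.continuousOn (by
        exact ((continuous_finset_sum _ fun i _ =>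
          (continuous_const.mul (hdiff i).continuous)).sub (continuous_const.mul continuous_id))))
    · intro t ht
      exact ((hfderiv t).differentiableAt).differentiableWithinAt
    · intro t ht
      rw [interior_Ici] at ht
      rw [(hfderiv t).deriv]
      have := hkey t (le_of_lt ht)
      linarith
  have hbound : ∀ t : ℝ, 0 ≤ t → g t < ∑ i, α i * M i := by
    intro t ht
    exact Finset.sum_lt_sum_of_nonempty hne fun i _ =>
      mul_lt_mul_of_pos_left (hbdd i t ht) (hα i)
  set S := ∑ i, α i * M i with hS
  have hg1 : g 1 < S := hbound 1 (by norm_num)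
  set T := 1 + (S - g 1) / γ with hT
  have hT1 : 1 ≤ T := by
    have h0 : 0 ≤ (S - g 1) / γ := div_nonneg (by linarith) (le_of_lt hγ)
    rw [hT]; linarith
  have hmt := hmono (Set.self_mem_Ici) (Set.mem_Ici.mpr hT1) hT1
  simp only at hmt
  have hγT : γ * T = γ + (S - g 1) := by
    rw [hT]
    field_simp
  have : g T ≥ S := by linarith [hmt, hγT]
  have := hbound T (by linarith)
  linarith
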